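/- Let F : ℝ^n → ℝ be differentiable on a convex set K with ∇F antitone with respect to the componentwise order (DR property). Then for any x ∈ K, t ≥ 0, and direction v ∈ ℝ^n with v ⪰ 0 or v ⪯ 0 such that x + t v ∈ K, we have F(x + t*v) ≤ F(x) + t * ⟨∇F(x), v⟩. -/

import Mathlib

open RealInnerProductSpace

theorem stmt_5 (n : ℕ) (F : EuclideanSpace ℝ (Fin n) → ℝ)
    (K : Set (EuclideanSpace ℝ (Fin n))) (hK : Convex ℝ K)
    (hdiff : ∀ x ∈ K, DifferentiableAt ℝ F x)
    (hDR : ∀ x ∈ K, ∀ y ∈ K, (∀ i, x i ≤ y i) → ∀ i, gradient F y i ≤ gradient F x i)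
    (x : EuclideanSpace ℝ (Fin n)) (hx : x ∈ K) (t : ℝ) (ht : 0 ≤ t)
    (v : EuclideanSpace ℝ (Fin n)) (hv : (∀ i, 0 ≤ v i) ∨ (∀ i, v i ≤ 0))
    (hxt : x + t • v ∈ K) :
    F (x + t • v) ≤ F x + t * ⟪gradient F x, v⟫ := by
  rcases eq_or_lt_of_le ht with rfl | ht'
  · simp
  -- membership of the segment
  have hmem : ∀ s ∈ Set.Icc (0:ℝ) t, x + s • v ∈ K := by
    intro s hs
    have h1 : (1 - s / t) • x + (s / t) • (x + t • v) = x + s • v := by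
      rw [smul_add, smul_smul, div_mul_cancel₀ _ (ne_of_gt ht')]
      rw [sub_smul, one_smul]
      abel
    have hst : 0 ≤ s / t := div_nonneg hs.1 ht
    have hst' : s / t ≤ 1 := (div_le_one ht').2 hs.2
    rw [← h1]
    exact hK hx hxt (by linarith) hst (by ring)
  set C : ℝ := ⟪gradient F x, v⟫ with hC
  -- derivative of the restricted function
  have hderiv : ∀ s ∈ Set.Icc (0:ℝ) t,
      HasDerivAt (fun s : ℝ => F (x + s • v)) ⟪gradient F (x + s • v), v⟫ s := by
    intro s hs
    have hy : x + s • v ∈ K := hmem s hs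
    have hline : HasDerivAt (fun s : ℝ => x + s • v) v s := by
      simpa using ((hasDerivAt_id s).smul_const v).const_add x
    have hF := (hdiff _ hy).hasGradientAt.hasFDerivAt
    have := hF.comp_hasDerivAt s hline
    simp [InnerProductSpace.toDual_apply_apply] at this ⊢
    exact (by exact this : HasDerivAt (F ∘ fun s : ℝ => x + s • v) _ s)
  -- bound on the derivative
  have hbound : ∀ s ∈ Set.Icc (0:ℝ) t, ⟪gradient F (x + s • v), v⟫ ≤ C := by
    intro s hs
    have hy : x + s • v ∈ K := hmem s hs
    rw [hC]
    simp only [PiLp.inner_apply, RCLike.inner_apply, conj_trivial]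
    apply Finset.sum_le_sum
    intro i _
    rcases hv with hv | hv
    · have hle : ∀ j, x j ≤ (x + s • v) j := by
        intro j
        simp only [PiLp.add_apply, PiLp.smul_apply, smul_eq_mul]
        nlinarith [hv j, hs.1]
      have := hDR x hx _ hy hle i
      have := hv i
      nlinarith
    · have hle : ∀ j, (x + s • v) j ≤ x j := by
        intro j
        simp only [PiLp.add_apply, PiLp.smul_apply, smul_eq_mul]
        nlinarith [hv j, hs.1]
      have := hDR _ hy x hx hle i
      have := hv i
      nlinarith
  -- mean value inequality
  have key : ∀ ⦃s⦄, s ∈ Set.Icc (0:ℝ) t →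
      F (x + s • v) ≤ F x + s * C := by
    refine image_le_of_deriv_right_le_deriv_boundary
      (f := fun s => F (x + s • v)) (f' := fun s => ⟪gradient F (x + s • v), v⟫)
      (a := 0) (b := t) (B := fun s => F x + s * C) (B' := fun _ => C)
      ?_ ?_ ?_ ?_ ?_ ?_
    · exact fun s hs => (hderiv s hs).continuousAt.continuousWithinAt
    · intro s hs
      exact (hderiv s (Set.mem_Icc_of_Ico hs)).hasDerivWithinAt
    · simp
    · exact (Continuous.continuousOn (by continuity))
    · intro s hs
      simpa using (((hasDerivAt_id s).mul_const C).const_add (F x)).hasDerivWithinAt (s := Set.Ici s)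
    · intro s hs
      exact hbound s (Set.mem_Icc_of_Ico hs)
  exact key (Set.right_mem_Icc.2 ht)
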